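/- Let μ ≥ 0 and 0 < α < β < 1, and set l̂(λ) = (λ^{1-α} + μ λ^{1-β})^{-1} for Re λ > 0. Then |λ l̂'(λ)| ≤ |l̂(λ)| and |λ² l̂''(λ)| ≤ 3 |l̂(λ)| for all Re λ > 0; i.e., l is 2-regular. -/

import Mathlib

open Complex

lemma keyIneq (z : ℂ) (hz : 0 < z.re) (μ a b c₁ c₂ : ℝ) (hμ : 0 ≤ μ)
    (hab : |a - b| ≤ 1) (hc₁ : c₁ ∈ Set.Icc (0:ℝ) 1) (hc₂ : c₂ ∈ Set.Icc (0:ℝ) 1) :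
    ‖((c₁:ℂ) * z ^ (a:ℂ) + (c₂:ℂ) * ((μ:ℂ) * z ^ (b:ℂ)))‖
      ≤ ‖(z ^ (a:ℂ) + (μ:ℂ) * z ^ (b:ℂ))‖ := by
  have hz0 : z ≠ 0 := fun h => by simp [h] at hz
  set u : ℂ := z ^ (a:ℂ) with hu
  set v : ℂ := (μ:ℂ) * z ^ (b:ℂ) with hv
  have harg : |z.arg| < Real.pi / 2 := abs_arg_lt_pi_div_two_iff.2 (Or.inl hz)
  have hR : 0 ≤ (u * (starRingEnd ℂ) v).re := by
    have h1 : u * (starRingEnd ℂ) v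
        = (μ:ℂ) * Complex.exp (Complex.log z * a + (starRingEnd ℂ) (Complex.log z) * b) := by
      rw [hu, hv, Complex.cpow_def_of_ne_zero hz0, Complex.cpow_def_of_ne_zero hz0]
      rw [map_mul, ← Complex.exp_conj, map_mul, Complex.exp_add]
      simp only [Complex.conj_ofReal]
      ring
    rw [h1]
    have him : (Complex.log z * a + (starRingEnd ℂ) (Complex.log z) * b).im
        = (a - b) * z.arg := by
      simp [Complex.log_im, Complex.mul_im, Complex.conj_im, Complex.conj_re,
        Complex.ofReal_re, Complex.ofReal_im]
      ring
    have hcos : 0 ≤ Real.cos ((a - b) * z.arg) := by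
      apply Real.cos_nonneg_of_mem_Icc
      have h2 : |(a - b) * z.arg| ≤ Real.pi / 2 := by
        rw [abs_mul]
        calc |a - b| * |z.arg| ≤ 1 * |z.arg| :=
              mul_le_mul_of_nonneg_right hab (abs_nonneg _)
          _ ≤ Real.pi / 2 := by rw [one_mul]; exact harg.le
      exact abs_le.1 h2
    have := Complex.exp_re (Complex.log z * a + (starRingEnd ℂ) (Complex.log z) * b)
    rw [Complex.mul_re]
    simp only [Complex.ofReal_re, Complex.ofReal_im, zero_mul, sub_zero]
    rw [this, him]
    positivity
  -- normSq comparison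
  have hconj : ((c₁:ℂ) * u) * (starRingEnd ℂ) ((c₂:ℂ) * v)
      = ((c₁ * c₂ : ℝ) : ℂ) * (u * (starRingEnd ℂ) v) := by
    rw [map_mul, Complex.conj_ofReal]; push_cast; ring
  have hN : Complex.normSq ((c₁:ℂ) * u + (c₂:ℂ) * v) ≤ Complex.normSq (u + v) := by
    rw [Complex.normSq_add, Complex.normSq_add, hconj,
      Complex.normSq_mul, Complex.normSq_mul, Complex.normSq_ofReal, Complex.normSq_ofReal]
    have hre : (((c₁ * c₂ : ℝ):ℂ) * (u * (starRingEnd ℂ) v)).re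
        = (c₁ * c₂) * (u * (starRingEnd ℂ) v).re := by
      rw [Complex.mul_re]; simp
    rw [hre]
    obtain ⟨h10, h11⟩ := hc₁
    obtain ⟨h20, h21⟩ := hc₂
    have nu := Complex.normSq_nonneg u
    have nv := Complex.normSq_nonneg v
    have k1 : (0:ℝ) ≤ (1 - c₁ * c₁) * Complex.normSq u :=
      mul_nonneg (by nlinarith) nu
    have k2 : (0:ℝ) ≤ (1 - c₂ * c₂) * Complex.normSq v :=
      mul_nonneg (by nlinarith) nv
    have k3 : (0:ℝ) ≤ (1 - c₁ * c₂) * (u * (starRingEnd ℂ) v).re :=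
      mul_nonneg (by nlinarith) hR
    nlinarith
  rw [Complex.norm_def, Complex.norm_def]
  exact Real.sqrt_le_sqrt hN

lemma kernel_aux (μ a b : ℝ) (hμ : 0 ≤ μ) (hb : 0 < b) (hba : b < a) (ha : a < 1) :
    ∀ z : ℂ, 0 < z.re →
      ‖(z * deriv (fun w : ℂ =>
          (w ^ ((a : ℝ) : ℂ) + (μ : ℂ) * w ^ ((b : ℝ) : ℂ))⁻¹) z)‖
        ≤ ‖((z ^ ((a : ℝ) : ℂ) + (μ : ℂ) * z ^ ((b : ℝ) : ℂ))⁻¹)‖ ∧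
      ‖(z ^ 2 * deriv (deriv (fun w : ℂ =>
          (w ^ ((a : ℝ) : ℂ) + (μ : ℂ) * w ^ ((b : ℝ) : ℂ))⁻¹)) z)‖
        ≤ 3 * ‖((z ^ ((a : ℝ) : ℂ) + (μ : ℂ) * z ^ ((b : ℝ) : ℂ))⁻¹)‖ := by
  have hab1 : |a - b| ≤ 1 := by rw [abs_le]; constructor <;> linarith
  set g : ℂ → ℂ := fun w => w ^ (a:ℂ) + (μ:ℂ) * w ^ (b:ℂ) with hg
  set g1 : ℂ → ℂ := fun w => (a:ℂ) * w ^ ((a:ℂ)-1) + (μ:ℂ) * ((b:ℂ) * w ^ ((b:ℂ)-1)) with hg1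
  set g2 : ℂ → ℂ := fun w => (a:ℂ) * (((a:ℂ)-1) * w ^ ((a:ℂ)-1-1))
      + (μ:ℂ) * ((b:ℂ) * (((b:ℂ)-1) * w ^ ((b:ℂ)-1-1))) with hg2
  -- derivative facts
  have hDg : ∀ w : ℂ, 0 < w.re → HasDerivAt g (g1 w) w := by
    intro w hw
    have hslit : w ∈ Complex.slitPlane := Complex.mem_slitPlane_iff.2 (Or.inl hw)
    have h1 : HasDerivAt (fun x : ℂ => x ^ (a:ℂ)) ((a:ℂ) * w ^ ((a:ℂ)-1)) w := by
      simpa using (hasDerivAt_id w).cpow_const hslit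
    have h2 : HasDerivAt (fun x : ℂ => x ^ (b:ℂ)) ((b:ℂ) * w ^ ((b:ℂ)-1)) w := by
      simpa using (hasDerivAt_id w).cpow_const hslit
    exact h1.add (h2.const_mul _)
  have hDg1 : ∀ w : ℂ, 0 < w.re → HasDerivAt g1 (g2 w) w := by
    intro w hw
    have hslit : w ∈ Complex.slitPlane := Complex.mem_slitPlane_iff.2 (Or.inl hw)
    have h1 : HasDerivAt (fun x : ℂ => x ^ ((a:ℂ)-1)) (((a:ℂ)-1) * w ^ ((a:ℂ)-1-1)) w := by
      simpa using (hasDerivAt_id w).cpow_const hslit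
    have h2 : HasDerivAt (fun x : ℂ => x ^ ((b:ℂ)-1)) (((b:ℂ)-1) * w ^ ((b:ℂ)-1-1)) w := by
      simpa using (hasDerivAt_id w).cpow_const hslit
    exact (h1.const_mul _).add ((h2.const_mul _).const_mul _)
  have hgne : ∀ w : ℂ, 0 < w.re → g w ≠ 0 := by
    intro w hw
    have hw0 : w ≠ 0 := fun h => by simp [h] at hw
    have h1 : ‖(w ^ (a:ℂ))‖ ≤ ‖(g w)‖ := by
      have := keyIneq w hw μ a b 1 0 hμ hab1 (by norm_num) (by norm_num)
      simpa using this
    have h2 : w ^ (a:ℂ) ≠ 0 := by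
      simp [Complex.cpow_eq_zero_iff, hw0]
    intro h
    have hp : 0 < ‖(w ^ (a:ℂ))‖ := norm_pos_iff.2 h2
    rw [h, norm_zero] at h1
    linarith
  intro z hz
  have hz0 : z ≠ 0 := fun h => by simp [h] at hz
  have hgz := hgne z hz
  -- basic cpow manipulations
  have hstep : ∀ c : ℂ, z ^ (c - 1) * z = z ^ c := by
    intro c
    calc z ^ (c-1) * z = z ^ (c-1) * z ^ (1:ℂ) := by rw [Complex.cpow_one]
      _ = z ^ (c - 1 + 1) := (Complex.cpow_add _ _ hz0).symm
      _ = z ^ c := by congr 1; ring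
  have hzg1 : z * g1 z = (a:ℂ) * z ^ (a:ℂ) + (b:ℂ) * ((μ:ℂ) * z ^ (b:ℂ)) := by
    simp only [hg1]
    have e1 := hstep (a:ℂ)
    have e2 := hstep (b:ℂ)
    calc z * ((a:ℂ) * z ^ ((a:ℂ)-1) + (μ:ℂ) * ((b:ℂ) * z ^ ((b:ℂ)-1)))
        = (a:ℂ) * (z ^ ((a:ℂ)-1) * z) + (b:ℂ) * ((μ:ℂ) * (z ^ ((b:ℂ)-1) * z)) := by ring
      _ = (a:ℂ) * z ^ (a:ℂ) + (b:ℂ) * ((μ:ℂ) * z ^ (b:ℂ)) := by rw [e1, e2]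
  have hzg2 : z ^ 2 * g2 z
      = (a:ℂ) * ((a:ℂ)-1) * z ^ (a:ℂ) + (b:ℂ) * ((b:ℂ)-1) * ((μ:ℂ) * z ^ (b:ℂ)) := by
    simp only [hg2]
    have e1 : z ^ ((a:ℂ)-1-1) * z * z = z ^ (a:ℂ) := by
      rw [hstep ((a:ℂ)-1), hstep (a:ℂ)]
    have e2 : z ^ ((b:ℂ)-1-1) * z * z = z ^ (b:ℂ) := by
      rw [hstep ((b:ℂ)-1), hstep (b:ℂ)]
    calc z ^ 2 * ((a:ℂ) * (((a:ℂ)-1) * z ^ ((a:ℂ)-1-1))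
          + (μ:ℂ) * ((b:ℂ) * (((b:ℂ)-1) * z ^ ((b:ℂ)-1-1))))
        = (a:ℂ) * ((a:ℂ)-1) * (z ^ ((a:ℂ)-1-1) * z * z)
          + (b:ℂ) * ((b:ℂ)-1) * ((μ:ℂ) * (z ^ ((b:ℂ)-1-1) * z * z)) := by ring
      _ = _ := by rw [e1, e2]
  -- the key abs bounds
  have key1 : ‖(z * g1 z)‖ ≤ ‖(g z)‖ := by
    rw [hzg1]
    exact keyIneq z hz μ a b a b hμ hab1
      (Set.mem_Icc.2 ⟨by linarith, ha.le⟩) (Set.mem_Icc.2 ⟨hb.le, by linarith⟩)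
  have key2 : ‖(z ^ 2 * g2 z)‖ ≤ ‖(g z)‖ := by
    have hrw : -(z ^ 2 * g2 z) = ((a*(1-a):ℝ):ℂ) * z ^ (a:ℂ)
        + ((b*(1-b):ℝ):ℂ) * ((μ:ℂ) * z ^ (b:ℂ)) := by
      rw [hzg2]; push_cast; ring
    calc ‖(z ^ 2 * g2 z)‖ = ‖(-(z ^ 2 * g2 z))‖ := (norm_neg _).symm
      _ ≤ ‖(g z)‖ := by
          rw [hrw]
          exact keyIneq z hz μ a b (a*(1-a)) (b*(1-b)) hμ hab1
            (Set.mem_Icc.2 ⟨by nlinarith, by nlinarith⟩)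
            (Set.mem_Icc.2 ⟨by nlinarith, by nlinarith⟩)
  -- first derivative identity
  have hDf : ∀ w : ℂ, 0 < w.re →
      HasDerivAt (fun w : ℂ => (g w)⁻¹) (-(g1 w) / (g w) ^ 2) w := by
    intro w hw
    exact (hDg w hw).inv (hgne w hw)
  have hderiv1 : ∀ w : ℂ, 0 < w.re →
      deriv (fun w : ℂ => (g w)⁻¹) w = -(g1 w) / (g w) ^ 2 :=
    fun w hw => (hDf w hw).deriv
  -- second derivative
  have hopen : IsOpen {w : ℂ | 0 < w.re} := isOpen_lt continuous_const Complex.continuous_re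
  have hev : deriv (fun w : ℂ => (g w)⁻¹) =ᶠ[nhds z] (fun w => -(g1 w) / (g w) ^ 2) := by
    filter_upwards [hopen.mem_nhds hz] with w hw using hderiv1 w hw
  have hDf1 : HasDerivAt (fun w => -(g1 w) / (g w) ^ 2)
      ((-(g2 z) * (g z) ^ 2 - -(g1 z) * (2 * g z ^ 1 * g1 z)) / ((g z) ^ 2) ^ 2) z := by
    have hsq : HasDerivAt (fun w => (g w) ^ 2) (2 * g z ^ 1 * g1 z) z := (hDg z hz).pow 2
    exact ((hDg1 z hz).neg).div hsq (pow_ne_zero 2 hgz)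
  have hderiv2 : deriv (deriv (fun w : ℂ => (g w)⁻¹)) z
      = (-(g2 z) * (g z) ^ 2 - -(g1 z) * (2 * g z ^ 1 * g1 z)) / ((g z) ^ 2) ^ 2 := by
    rw [hev.deriv_eq]; exact hDf1.deriv
  -- abs computations
  set G : ℝ := ‖(g z)‖ with hG
  have hGpos : 0 < G := by
    rw [hG]; exact (norm_pos_iff.2 hgz)
  constructor
  · rw [hderiv1 z hz, norm_inv]
    have : z * (-(g1 z) / g z ^ 2) = -((z * g1 z) / g z ^ 2) := by ring
    rw [this, norm_neg, norm_div, norm_pow]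
    calc ‖(z * g1 z)‖ / G ^ 2 ≤ G / G ^ 2 := by gcongr
        _ = G⁻¹ := by field_simp [pow_two]
  · rw [hderiv2, norm_inv]
    have hrw : z ^ 2 * ((-(g2 z) * g z ^ 2 - -(g1 z) * (2 * g z ^ 1 * g1 z)) / (g z ^ 2) ^ 2)
        = -((z ^ 2 * g2 z) / g z ^ 2) + 2 * (z * g1 z) ^ 2 / g z ^ 3 := by
      field_simp
      ring
    rw [hrw]
    have t1 : ‖(-((z ^ 2 * g2 z) / g z ^ 2))‖ ≤ G⁻¹ := by
      rw [norm_neg, norm_div, norm_pow]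
      calc ‖(z ^ 2 * g2 z)‖ / G ^ 2 ≤ G / G ^ 2 := by gcongr
        _ = G⁻¹ := by field_simp [pow_two]
    have t2 : ‖(2 * (z * g1 z) ^ 2 / g z ^ 3)‖ ≤ 2 * G⁻¹ := by
      rw [norm_div, norm_mul, norm_pow, norm_pow, Complex.norm_two]
      calc 2 * ‖(z * g1 z)‖ ^ 2 / G ^ 3 ≤ 2 * G ^ 2 / G ^ 3 := by gcongr
        _ = 2 * G⁻¹ := by
            rw [pow_succ]
            field_simp
    calc ‖(-((z ^ 2 * g2 z) / g z ^ 2) + 2 * (z * g1 z) ^ 2 / g z ^ 3)‖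
        ≤ ‖(-((z ^ 2 * g2 z) / g z ^ 2))‖
          + ‖(2 * (z * g1 z) ^ 2 / g z ^ 3)‖ := norm_add_le _ _
      _ ≤ G⁻¹ + 2 * G⁻¹ := add_le_add t1 t2
      _ = 3 * G⁻¹ := by ring


theorem kernel_two_regular
    (μ α β : ℝ) (hμ : 0 ≤ μ) (hα : 0 < α) (hαβ : α < β) (hβ : β < 1) :
    ∀ z : ℂ, 0 < z.re →
      ‖(z * deriv (fun w : ℂ =>
          (w ^ ((1 - α : ℝ) : ℂ) + (μ : ℂ) * w ^ ((1 - β : ℝ) : ℂ))⁻¹) z)‖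
        ≤ ‖((z ^ ((1 - α : ℝ) : ℂ) + (μ : ℂ) * z ^ ((1 - β : ℝ) : ℂ))⁻¹)‖ ∧
      ‖(z ^ 2 * deriv (deriv (fun w : ℂ =>
          (w ^ ((1 - α : ℝ) : ℂ) + (μ : ℂ) * w ^ ((1 - β : ℝ) : ℂ))⁻¹)) z)‖
        ≤ 3 * ‖((z ^ ((1 - α : ℝ) : ℂ) + (μ : ℂ) * z ^ ((1 - β : ℝ) : ℂ))⁻¹)‖ :=
  kernel_aux μ (1 - α) (1 - β) hμ (by linarith) (by linarith) (by linarith)
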